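/- (Theorem 4.) Every multi-delimiter code D_{m_1,…,m_t} is universal: there exist a bijection a : ℕ_{≥1} → D_{m_1,…,m_t} whose codeword lengths are nondecreasing (i ≤ j implies |a(i)| ≤ |a(j)|) and a constant K > 0 such that, for every n ≥ 1 and every probability vector p_1 ≥ p_2 ≥ … ≥ p_n ≥ 0 with ∑_{i=1}^n p_i = 1, one has ∑_{i=1}^n |a(i)|·p_i ≤ K · max(1, H(P)), where H(P) = −∑_{i=1}^n p_i log₂ p_i (with the convention 0·log₂ 0 = 0). -/

import Mathlib

/-- The word `1^mi 0`. -/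
def shortWord (mi : ℕ) : List Bool := List.replicate mi true ++ [false]

/-- The delimiter `0 1^mi 0`. -/
def delim (mi : ℕ) : List Bool := false :: (List.replicate mi true ++ [false])

/-- The multi-delimiter code `D_{m_1,…,m_t}`. -/
def MultiDelim {t : ℕ} (m : Fin t → ℕ) : Set (List Bool) :=
  {w | (∃ i, w = shortWord (m i)) ∨
    ((∀ i, ¬ shortWord (m i) <+: w) ∧
     (∃ i, delim (m i) <:+ w) ∧
     (∀ i u v, w = u ++ delim (m i) ++ v → v = []))}

namespace MDAux

/-! ### Binary encoding of words with a leading `1` -/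

def enc : List Bool → ℕ
  | [] => 1
  | b :: l => 2 * enc l + (if b then 1 else 0)

lemma enc_lb : ∀ w : List Bool, 2 ^ w.length ≤ enc w
  | [] => le_refl 1
  | b :: l => by
    have := enc_lb l
    simp only [enc, List.length_cons, pow_succ]
    cases b <;> simp <;> omega

lemma enc_ub : ∀ w : List Bool, enc w < 2 ^ (w.length + 1)
  | [] => by simp [enc]
  | b :: l => by
    have := enc_ub l
    simp only [enc, List.length_cons, pow_succ]
    cases b <;> simp <;> omega

lemma enc_pos (w : List Bool) : 0 < enc w := by
  have h1 := enc_lb w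
  have h2 : (0:ℕ) < 2 ^ w.length := Nat.pow_pos (by norm_num)
  omega

lemma enc_inj : Function.Injective enc := by
  intro x
  induction x with
  | nil =>
    intro y h
    cases y with
    | nil => rfl
    | cons b l =>
      exfalso
      have h1 : enc ([] : List Bool) = 1 := rfl
      have h2 : enc (b :: l) = 2 * enc l + (if b then 1 else 0) := rfl
      have := enc_pos l
      rw [h] at h1
      cases b <;> simp [h2] at h1 <;> omega
  | cons b l ih =>
    intro y h
    cases y with
    | nil =>
      exfalso
      have h2 : enc (b :: l) = 2 * enc l + (if b then 1 else 0) := rfl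
      have := enc_pos l
      have h1 : enc ([] : List Bool) = 1 := rfl
      rw [← h] at h1
      cases b <;> simp [h2] at h1 <;> omega
    | cons c l' =>
      have h2 : enc (b :: l) = 2 * enc l + (if b then 1 else 0) := rfl
      have h3 : enc (c :: l') = 2 * enc l' + (if c then 1 else 0) := rfl
      rw [h2, h3] at h
      have hb : b = c ∧ enc l = enc l' := by
        cases b <;> cases c <;> simp_all <;> omega
      rw [hb.1, ih hb.2]

/-! ### Words given by their run-length decomposition -/

/-- word from run lengths: `ζ(a₁,…,aₖ) = 1^{a₁} 0 1^{a₂} 0 … 1^{aₖ} 0` -/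
def zeta : List ℕ → List Bool
  | [] => []
  | a :: r => List.replicate a true ++ false :: zeta r

lemma zeta_append (r s : List ℕ) : zeta (r ++ s) = zeta r ++ zeta s := by
  induction r with
  | nil => rfl
  | cons a r ih => simp [zeta, ih]

lemma rep_zero_eq : ∀ {k c : ℕ} {v w : List Bool},
    List.replicate k true ++ false :: v = List.replicate c true ++ false :: w → k = c ∧ v = w := by
  intro k
  induction k with
  | zero =>
    intro c v w h
    cases c with
    | zero => simpa using h
    | succ c => simp [List.replicate_succ] at h
  | succ k ih =>
    intro c v w h
    cases c with
    | zero => simp [List.replicate_succ] at h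
    | succ c =>
      simp only [List.replicate_succ, List.cons_append, List.cons.injEq, true_and] at h
      obtain ⟨h1, h2⟩ := ih h
      exact ⟨by omega, h2⟩

lemma zeta_inj : Function.Injective zeta := by
  intro r
  induction r with
  | nil =>
    intro s h
    cases s with
    | nil => rfl
    | cons a s =>
      exfalso
      have : (zeta [] : List Bool).length = 0 := rfl
      rw [h] at this; simp [zeta] at this
  | cons a r ih =>
    intro s h
    cases s with
    | nil =>
      exfalso
      have : (zeta [] : List Bool).length = 0 := rfl
      rw [← h] at this; simp [zeta] at this
    | cons b s =>
      have h' : List.replicate a true ++ false :: zeta r =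
          List.replicate b true ++ false :: zeta s := h
      obtain ⟨h1, h2⟩ := rep_zero_eq h'
      rw [h1, ih h2]

lemma zeta_length : ∀ r : List ℕ, (zeta r).length = r.sum + r.length
  | [] => rfl
  | a :: r => by simp [zeta, zeta_length r]; omega

lemma split_head : ∀ {a : ℕ} {u v w : List Bool},
    List.replicate a true ++ false :: w = u ++ false :: v →
    (u = List.replicate a true ∧ v = w) ∨
    (∃ u', u = List.replicate a true ++ false :: u' ∧ w = u' ++ false :: v) := by
  intro a
  induction a with
  | zero =>
    intro u v w h
    cases u with
    | nil =>
      simp only [List.replicate_zero, List.nil_append, List.cons.injEq] at h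
      exact Or.inl ⟨rfl, h.2.symm⟩
    | cons b u' =>
      simp only [List.replicate_zero, List.nil_append, List.cons_append, List.cons.injEq] at h
      right; exact ⟨u', by simp [← h.1], h.2⟩
  | succ a ih =>
    intro u v w h
    cases u with
    | nil =>
      simp [List.replicate_succ] at h
    | cons b u' =>
      simp only [List.replicate_succ, List.cons_append, List.cons.injEq] at h
      obtain ⟨hb, h2⟩ := h
      rcases ih h2 with ⟨h3, h4⟩ | ⟨u'', h3, h4⟩
      · left; constructor
        · rw [List.replicate_succ, h3, hb]
        · exact h4
      · right; exact ⟨u'', by rw [List.replicate_succ]; simp [h3, hb], h4⟩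

lemma zeta_head : ∀ {r : List ℕ} {k : ℕ} {v : List Bool},
    zeta r = List.replicate k true ++ false :: v → ∃ r₂, r = k :: r₂ ∧ v = zeta r₂ := by
  intro r k v h
  cases r with
  | nil =>
    exfalso
    have : (zeta [] : List Bool).length = 0 := rfl
    rw [h] at this; simp at this
  | cons c r₂ =>
    have h' : List.replicate c true ++ false :: zeta r₂ = List.replicate k true ++ false :: v := h
    obtain ⟨h1, h2⟩ := rep_zero_eq h'
    exact ⟨r₂, by rw [h1], h2.symm⟩

/-- occurrence lemma: any occurrence of `0 1^k 0` in `ζ(r)` corresponds to an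
entry `k` of `r`, with the remainder of the word being `ζ` of the remainder. -/
lemma occ : ∀ (r : List ℕ) (u : List Bool) (k : ℕ) (v : List Bool),
    zeta r = u ++ false :: (List.replicate k true ++ false :: v) →
    ∃ r₁ r₂, r = r₁ ++ k :: r₂ ∧ v = zeta r₂ := by
  intro r
  induction r with
  | nil =>
    intro u k v h
    exfalso
    have : (zeta [] : List Bool).length = 0 := rfl
    rw [h] at this; simp at this
  | cons a r' ih =>
    intro u k v h
    have h' : List.replicate a true ++ false :: zeta r' =
        u ++ false :: (List.replicate k true ++ false :: v) := h
    rcases split_head h' with ⟨h1, h2⟩ | ⟨u', h1, h2⟩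
    · obtain ⟨r₂, h3, h4⟩ := zeta_head h2.symm
      exact ⟨[a], r₂, by rw [h3]; rfl, h4⟩
    · obtain ⟨r₁, r₂, h3, h4⟩ := ih u' k v h2
      exact ⟨a :: r₁, r₂, by rw [h3]; rfl, h4⟩

lemma entry_lemma (M : ℕ) (m0 : ℕ) :
    ∀ (bs' : List ℕ), (∀ x ∈ bs', x = 0 ∨ x = M+1) →
    ∀ (r₁ : List ℕ) (k : ℕ) (r₂ : List ℕ),
      bs' ++ [0, m0] = r₁ ++ k :: r₂ → 0 < k → k ≤ M → r₂ = [] := by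
  intro bs'
  induction bs' with
  | nil =>
    intro _ r₁ k r₂ h hk hkM
    rcases r₁ with _ | ⟨x, _ | ⟨y, r₁''⟩⟩
    · simp at h; omega
    · simp at h; exact h.2.2
    · exfalso
      have := congrArg List.length h
      simp at this
  | cons c bs' ih =>
    intro hmem r₁ k r₂ h hk hkM
    cases r₁ with
    | nil =>
      simp only [List.cons_append, List.nil_append, List.cons.injEq] at h
      rcases hmem c (by simp) with rfl | rfl <;> omega
    | cons x r₁' =>
      simp only [List.cons_append, List.cons.injEq] at h
      exact ih (fun y hy => hmem y (by simp [hy])) r₁' k r₂ h.2 hk hkM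

/-! ### The exponential family of codewords -/

def codeW (M m0 : ℕ) (bs : List Bool) : List Bool :=
  zeta (bs.map (fun b => if b then M + 1 else 0) ++ [0, m0])

lemma codeW_inj (M m0 : ℕ) : Function.Injective (codeW M m0) := by
  intro x y h
  have h1 := zeta_inj h
  have h2 : x.map (fun b => if b then M + 1 else 0) = y.map (fun b => if b then M + 1 else 0) :=
    List.append_cancel_right h1
  have hf : Function.Injective (fun b : Bool => if b then M + 1 else 0) := by
    intro a b hab
    cases a <;> cases b <;> simp_all
  exact List.map_injective_iff.mpr hf h2

lemma codeW_length (M m0 : ℕ) (bs : List Bool) :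
    (codeW M m0 bs).length ≤ (M + 2) * bs.length + (m0 + 2) := by
  unfold codeW
  rw [zeta_length]
  have hsum : (bs.map (fun b => if b then M + 1 else 0)).sum ≤ (M + 1) * bs.length := by
    induction bs with
    | nil => simp
    | cons b bs ih =>
      simp only [List.map_cons, List.sum_cons, List.length_cons]
      cases b <;> simp <;> nlinarith [ih]
  simp only [List.sum_append, List.length_append, List.length_map]
  simp only [List.sum_cons, List.sum_nil, List.length_cons, List.length_nil]
  nlinarith [hsum]

lemma zeta_delim (k : ℕ) : zeta [0, k] = delim k := by
  simp [zeta, delim]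

lemma codeW_mem {t : ℕ} (m : Fin t → ℕ) (ht : 0 < t) (hpos : ∀ i, 0 < m i)
    {M : ℕ} (hM : ∀ i, m i ≤ M) (bs : List Bool) :
    codeW M (m ⟨0, ht⟩) bs ∈ MultiDelim m := by
  set m0 := m ⟨0, ht⟩ with hm0
  set bs' := bs.map (fun b => if b then M + 1 else 0) with hbs'
  have hmem : ∀ x ∈ bs', x = 0 ∨ x = M + 1 := by
    intro x hx
    rw [hbs'] at hx
    simp only [List.mem_map] at hx
    obtain ⟨b, _, rfl⟩ := hx
    cases b <;> simp
  right
  refine ⟨?_, ⟨⟨0, ht⟩, ?_⟩, ?_⟩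
  · -- no shortWord prefix
    intro i hpre
    obtain ⟨x, hx⟩ := hpre
    have hx' : codeW M m0 bs = List.replicate (m i) true ++ false :: x := by
      rw [← hx]; simp [shortWord]
    obtain ⟨r₂, hr, _⟩ := zeta_head hx'
    -- head of bs' ++ [0, m0] equals m i, but head is 0 or M+1
    have h0 : 0 < m i := hpos i
    have h1 : m i ≤ M := hM i
    rcases bs with _ | ⟨b0, bs''⟩
    · simp only [List.map_nil, List.nil_append] at hr
      have h2 := (List.cons.inj hr).1
      omega
    · simp only [List.map_cons, List.cons_append] at hr
      have h2 := (List.cons.inj hr).1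
      cases b0 <;> simp at h2 <;> omega
  · -- delim m0 is a suffix
    refine ⟨zeta bs', ?_⟩
    show zeta bs' ++ delim m0 = codeW M m0 bs
    rw [← zeta_delim, ← zeta_append]
    rfl
  · -- delims occur only as the suffix
    intro i u v hw
    have hw' : codeW M m0 bs = u ++ false :: (List.replicate (m i) true ++ false :: v) := by
      rw [hw]; simp [delim]
    obtain ⟨r₁, r₂, hr, hv⟩ := occ _ u (m i) v hw'
    have hr₂ : r₂ = [] := entry_lemma M m0 bs' hmem r₁ (m i) r₂ hr (hpos i) (hM i)
    rw [hv, hr₂]; rfl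

/-! ### Real logarithm estimate for `Nat.clog` -/

lemma clog_le_logb (i : ℕ) (hi : 1 ≤ i) :
    (Nat.clog 2 i : ℝ) ≤ Real.logb 2 i + 1 := by
  have hlogb0 : (0:ℝ) ≤ Real.logb 2 i :=
    Real.logb_nonneg (by norm_num) (by exact_mod_cast hi)
  cases h : Nat.clog 2 i with
  | zero => push_cast; linarith
  | succ c =>
    have hi1 : 1 < i := by
      by_contra hc
      have : i = 1 := by omega
      rw [this, Nat.clog_one_right] at h
      exact absurd h (by omega)
    have hpow : 2 ^ (Nat.clog 2 i - 1) < i := Nat.pow_pred_clog_lt_self (by norm_num) hi1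
    rw [h] at hpow
    simp only [Nat.add_sub_cancel] at hpow
    have hc : (c : ℝ) < Real.logb 2 i := by
      have h2 : Real.logb 2 ((2:ℝ) ^ c) < Real.logb 2 i := by
        apply Real.logb_lt_logb (by norm_num) (by positivity)
        exact_mod_cast hpow
      rwa [Real.logb_pow, Real.logb_self_eq_one (by norm_num : (1:ℝ) < 2), mul_one] at h2
    push_cast
    linarith

end MDAux
theorem multiDelim_universal {t : ℕ} (ht : 0 < t) (m : Fin t → ℕ)
    (hpos : ∀ i, 0 < m i) (hmono : StrictMono m) :
    ∃ (a : {i : ℕ // 0 < i} → MultiDelim m) (K : ℝ),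
      Function.Bijective a ∧
      (∀ i j : {i : ℕ // 0 < i}, i ≤ j →
        (a i : List Bool).length ≤ (a j : List Bool).length) ∧
      0 < K ∧
      (∀ (n : ℕ), 1 ≤ n → ∀ p : Fin n → ℝ,
        (∀ i, 0 ≤ p i) → (∀ i j : Fin n, i ≤ j → p j ≤ p i) →
        (∑ i, p i = 1) →
        ∑ i : Fin n, ((a ⟨i.1 + 1, Nat.succ_pos _⟩ : List Bool).length : ℝ) * p i
          ≤ K * max 1 (-∑ i : Fin n, p i * Real.logb 2 (p i))) := by
  classical
  set M := m ⟨t - 1, by omega⟩ with hMdef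
  have hM : ∀ i, m i ≤ M := by
    intro i
    apply hmono.monotone
    rcases i with ⟨iv, hiv⟩
    exact Fin.mk_le_mk.mpr (by omega)
  set m0 := m ⟨0, ht⟩ with hm0def
  set q : ℕ → Prop := fun n => ∃ w ∈ MultiDelim m, MDAux.enc w = n with hq
  have hinf : (setOf q).Infinite :=
    Set.infinite_of_injective_forall_mem
      (f := fun bs : List Bool => MDAux.enc (MDAux.codeW M m0 bs))
      (MDAux.enc_inj.comp (MDAux.codeW_inj M m0))
      (fun bs => ⟨MDAux.codeW M m0 bs, MDAux.codeW_mem m ht hpos hM bs, rfl⟩)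
  have hwj : ∀ j : ℕ, ∃ w ∈ MultiDelim m, MDAux.enc w = Nat.nth q j :=
    fun j => Nat.nth_mem_of_infinite hinf j
  choose W hWmem hWenc using hwj
  -- length bound for the sorted enumeration
  have hlen : ∀ j : ℕ, (W j).length ≤ (M + 2) * (Nat.clog 2 (j + 1) + 2) := by
    intro j
    set L := Nat.clog 2 (j + 1) with hL
    have hle : j + 1 ≤ 2 ^ L := Nat.le_pow_clog (by norm_num) _
    set B := 2 ^ ((M + 2) * (L + 2)) with hB
    have hcount : 2 ^ L ≤ Nat.count q B := by
      rw [Nat.count_eq_card_filter_range]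
      have hcard : (Finset.univ : Finset (Fin L → Bool)).card = 2 ^ L := by
        simp [Fintype.card_fun]
      rw [← hcard]
      apply Finset.card_le_card_of_injOn
        (fun x => MDAux.enc (MDAux.codeW M m0 (List.ofFn x)))
      · intro x _
        simp only [Finset.mem_coe, Finset.coe_filter, Set.mem_setOf_eq, Finset.mem_filter, Finset.mem_range]
        refine ⟨?_, MDAux.codeW M m0 (List.ofFn x), MDAux.codeW_mem m ht hpos hM _, rfl⟩
        have h1 := MDAux.enc_ub (MDAux.codeW M m0 (List.ofFn x))
        have h2 := MDAux.codeW_length M m0 (List.ofFn x)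
        rw [List.length_ofFn] at h2
        have hm0M : m0 ≤ M := hM _
        have h3 : (MDAux.codeW M m0 (List.ofFn x)).length + 1 ≤ (M + 2) * (L + 2) := by
          nlinarith
        calc MDAux.enc (MDAux.codeW M m0 (List.ofFn x))
            < 2 ^ ((MDAux.codeW M m0 (List.ofFn x)).length + 1) := h1
          _ ≤ 2 ^ ((M + 2) * (L + 2)) := Nat.pow_le_pow_right (by norm_num) h3
      · intro x _ y _ hxy
        exact List.ofFn_injective
          ((MDAux.enc_inj.comp (MDAux.codeW_inj M m0)) hxy)
    have hnth : Nat.nth q j < B :=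
      Nat.nth_lt_of_lt_count (lt_of_lt_of_le (by omega) hcount)
    have h2 := MDAux.enc_lb (W j)
    rw [hWenc j] at h2
    have h4 : 2 ^ (W j).length < 2 ^ ((M + 2) * (L + 2)) := lt_of_le_of_lt h2 hnth
    have h5 : (W j).length < (M + 2) * (L + 2) :=
      (Nat.pow_lt_pow_iff_right (by norm_num)).mp h4
    omega
  refine ⟨fun i => ⟨W (i.1 - 1), hWmem _⟩, 4 * ((M : ℝ) + 2), ⟨?_, ?_⟩, ?_, ?_, ?_⟩
  · -- injective
    intro i j hij
    have h1 : MDAux.enc (W (i.1 - 1)) = MDAux.enc (W (j.1 - 1)) := by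
      have := congrArg (fun x : MultiDelim m => MDAux.enc x.1) hij
      simpa using this
    rw [hWenc, hWenc] at h1
    have h2 := (Nat.nth_strictMono hinf).injective h1
    have hi := i.2
    have hj := j.2
    exact Subtype.ext (by omega)
  · -- surjective
    intro w
    have hqw : q (MDAux.enc w.1) := ⟨w.1, w.2, rfl⟩
    have hmem : MDAux.enc w.1 ∈ Set.range (Nat.nth q) := by
      rw [Nat.range_nth_of_infinite hinf]; exact hqw
    obtain ⟨j, hj⟩ := hmem
    refine ⟨⟨j + 1, Nat.succ_pos _⟩, ?_⟩
    apply Subtype.ext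
    show W (j + 1 - 1) = w.1
    apply MDAux.enc_inj
    rw [Nat.add_sub_cancel, hWenc]
    exact hj
  · -- nondecreasing lengths
    intro i j hij
    show (W (i.1 - 1)).length ≤ (W (j.1 - 1)).length
    have h1 : Nat.nth q (i.1 - 1) ≤ Nat.nth q (j.1 - 1) :=
      (Nat.nth_strictMono hinf).monotone (Nat.sub_le_sub_right hij 1)
    have h2 := MDAux.enc_lb (W (i.1 - 1))
    have h3 := MDAux.enc_ub (W (j.1 - 1))
    rw [hWenc] at h2 h3
    have h4 : 2 ^ (W (i.1 - 1)).length < 2 ^ ((W (j.1 - 1)).length + 1) := by omega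
    have h5 := (Nat.pow_lt_pow_iff_right (by norm_num : 1 < 2)).mp h4
    omega
  · positivity
  · -- the entropy bound
    intro n hn p hp0 hpmono hpsum
    set H := -∑ i : Fin n, p i * Real.logb 2 (p i) with hH
    have hp1 : ∀ i, p i ≤ 1 := by
      intro i
      calc p i ≤ ∑ j, p j := Finset.single_le_sum (fun j _ => hp0 j) (Finset.mem_univ i)
        _ = 1 := hpsum
    have hpile : ∀ i : Fin n, ((i.1 : ℝ) + 1) * p i ≤ 1 := by
      intro i
      have hcard : (Finset.Iic i).card = i.1 + 1 := by simp
      have h1 : ((i.1 : ℝ) + 1) * p i = ∑ _j ∈ Finset.Iic i, p i := by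
        rw [Finset.sum_const, hcard]; push_cast; ring
      rw [h1]
      calc ∑ _j ∈ Finset.Iic i, p i ≤ ∑ j ∈ Finset.Iic i, p j :=
            Finset.sum_le_sum (fun j hj => hpmono j i (Finset.mem_Iic.mp hj))
        _ ≤ ∑ j, p j := Finset.sum_le_sum_of_subset_of_nonneg (Finset.subset_univ _)
            (fun j _ _ => hp0 j)
        _ = 1 := hpsum
    have hterm : ∀ i : Fin n, p i * Real.logb 2 ((i.1 : ℝ) + 1) ≤
        -(p i * Real.logb 2 (p i)) := by
      intro i
      rcases eq_or_lt_of_le (hp0 i) with h0 | h0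
      · rw [← h0]; simp
      · have hle : ((i.1 : ℝ) + 1) ≤ 1 / p i := by
          rw [le_div_iff₀ h0]; exact hpile i
        have h2 : Real.logb 2 ((i.1 : ℝ) + 1) ≤ Real.logb 2 (1 / p i) :=
          Real.logb_le_logb_of_le (by norm_num) (by positivity) hle
        rw [one_div, Real.logb_inv] at h2
        have h3 := mul_le_mul_of_nonneg_left h2 (hp0 i)
        linarith
    have hH0 : 0 ≤ H := by
      rw [hH]
      have h1 : ∀ i ∈ Finset.univ, p i * Real.logb 2 (p i) ≤ 0 := fun i _ =>
        mul_nonpos_iff.mpr (Or.inl ⟨hp0 i, Real.logb_nonpos (by norm_num) (hp0 i) (hp1 i)⟩)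
      have := Finset.sum_nonpos h1
      linarith
    have hlenR : ∀ i : Fin n, ((W i.1).length : ℝ) ≤
        ((M : ℝ) + 2) * (Real.logb 2 ((i.1 : ℝ) + 1) + 3) := by
      intro i
      have h1 := hlen i.1
      have h2 := MDAux.clog_le_logb (i.1 + 1) (by omega)
      have h3 : ((W i.1).length : ℝ) ≤ ((M : ℝ) + 2) * ((Nat.clog 2 (i.1 + 1) : ℝ) + 2) := by
        exact_mod_cast h1
      have h4 : ((Nat.clog 2 (i.1 + 1) : ℝ) + 2) ≤ Real.logb 2 ((i.1 : ℝ) + 1) + 3 := by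
        push_cast at h2 ⊢
        linarith
      calc ((W i.1).length : ℝ) ≤ ((M : ℝ) + 2) * ((Nat.clog 2 (i.1 + 1) : ℝ) + 2) := h3
        _ ≤ ((M : ℝ) + 2) * (Real.logb 2 ((i.1 : ℝ) + 1) + 3) :=
            mul_le_mul_of_nonneg_left h4 (by positivity)
    have hstep : ∑ i : Fin n, ((W i.1).length : ℝ) * p i ≤
        ((M : ℝ) + 2) * (∑ i : Fin n, p i * Real.logb 2 ((i.1 : ℝ) + 1)) +
          3 * ((M : ℝ) + 2) * ∑ i : Fin n, p i := by
      have h1 : ∑ i : Fin n, ((W i.1).length : ℝ) * p i ≤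
          ∑ i : Fin n, (((M : ℝ) + 2) * (Real.logb 2 ((i.1 : ℝ) + 1) + 3)) * p i :=
        Finset.sum_le_sum (fun i _ => mul_le_mul_of_nonneg_right (hlenR i) (hp0 i))
      have h2 : ∑ i : Fin n, (((M : ℝ) + 2) * (Real.logb 2 ((i.1 : ℝ) + 1) + 3)) * p i =
          ((M : ℝ) + 2) * (∑ i : Fin n, p i * Real.logb 2 ((i.1 : ℝ) + 1)) +
            3 * ((M : ℝ) + 2) * ∑ i : Fin n, p i := by
        rw [Finset.mul_sum, Finset.mul_sum, ← Finset.sum_add_distrib]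
        exact Finset.sum_congr rfl (fun i _ => by ring)
      linarith
    have hS1 : ∑ i : Fin n, p i * Real.logb 2 ((i.1 : ℝ) + 1) ≤ H := by
      rw [hH]
      calc ∑ i : Fin n, p i * Real.logb 2 ((i.1 : ℝ) + 1)
          ≤ ∑ i : Fin n, -(p i * Real.logb 2 (p i)) := Finset.sum_le_sum (fun i _ => hterm i)
        _ = -∑ i : Fin n, p i * Real.logb 2 (p i) := by rw [Finset.sum_neg_distrib]
    simp only [Nat.add_sub_cancel]
    have hfin : ((M : ℝ) + 2) * H + 3 * ((M : ℝ) + 2) ≤ 4 * ((M : ℝ) + 2) * max 1 H := by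
      rcases le_total H 1 with hc | hc
      · rw [max_eq_left hc]
        nlinarith
      · rw [max_eq_right hc]
        nlinarith
    have hmul : ((M : ℝ) + 2) * (∑ i : Fin n, p i * Real.logb 2 ((i.1 : ℝ) + 1)) ≤
        ((M : ℝ) + 2) * H := mul_le_mul_of_nonneg_left hS1 (by positivity)
    rw [hpsum] at hstep
    calc ∑ i : Fin n, ((W i.1).length : ℝ) * p i
        ≤ ((M : ℝ) + 2) * (∑ i : Fin n, p i * Real.logb 2 ((i.1 : ℝ) + 1)) +
            3 * ((M : ℝ) + 2) * 1 := hstep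
      _ ≤ ((M : ℝ) + 2) * H + 3 * ((M : ℝ) + 2) := by linarith
      _ ≤ 4 * ((M : ℝ) + 2) * max 1 H := hfin
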